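/- If a finite simplicial complex Y collapses onto a subcomplex X, then the underlying polyhedron |X| (the union of the convex hulls of the faces of X) is a strong deformation retract of |Y|; that is, there is a continuous map H : |Y| × [0,1] → |Y| with H(y,0) = y for all y ∈ |Y|, H(y,1) ∈ |X| for all y ∈ |Y|, and H(x,t) = x for all x ∈ |X| and t ∈ [0,1]. In particular, the underlying space of every collapsible finite simplicial complex is contractible. -/

import Mathlib

open Geometry unitInterval

variable {E : Type*} [NormedAddCommGroup E] [NormedSpace ℝ E]

/-- `t` is a free face of the simplicial complex `K`, with `s` the unique face
properly containing it; moreover `card s = card t + 1`. -/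
def IsFreeFace (K : SimplicialComplex ℝ E) (t s : Finset E) : Prop :=
  t ∈ K.faces ∧ s ∈ K.faces ∧ t ⊂ s ∧ s.card = t.card + 1 ∧
    ∀ u ∈ K.faces, t ⊂ u → u = s

/-- `L` is obtained from `K` by an elementary collapse: removing a free face `t`
together with the unique face `s` properly containing it. -/
def ElemCollapse (K L : SimplicialComplex ℝ E) : Prop :=
  ∃ t s : Finset E, IsFreeFace K t s ∧ L.faces = K.faces \ {t, s}

/-- `K` collapses onto `L` via a finite sequence of elementary collapses. -/
def CollapsesTo (K L : SimplicialComplex ℝ E) : Prop :=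
  Relation.ReflTransGen ElemCollapse K L

/-- `K` is collapsible: it collapses onto a subcomplex consisting of a single vertex. -/
def Collapsible (K : SimplicialComplex ℝ E) : Prop :=
  ∃ (L : SimplicialComplex ℝ E) (v : E), L.faces = {{v}} ∧ CollapsesTo K L

namespace CollapseProofAux

/-- Strong deformation retract data. -/
def SDR (Y X : SimplicialComplex ℝ E) : Prop :=
  ∃ H : C(Y.space × I, Y.space),
    (∀ y : Y.space, H (y, 0) = y) ∧
    (∀ y : Y.space, ((H (y, 1) : E) ∈ X.space)) ∧
    (∀ y : Y.space, (y : E) ∈ X.space → ∀ t : I, H (y, t) = y)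

lemma sdr_refl (X : SimplicialComplex ℝ E) : SDR X X := by
  refine ⟨⟨fun p => p.1, continuous_fst⟩, fun y => rfl, fun y => y.2, fun y _ t => rfl⟩

lemma space_mono {K L : SimplicialComplex ℝ E} (h : L.faces ⊆ K.faces) :
    L.space ⊆ K.space :=
  Set.iUnion₂_subset fun u hu => Geometry.SimplicialComplex.convexHull_subset_space (h hu)

lemma elem_faces_subset {K L : SimplicialComplex ℝ E} (h : ElemCollapse K L) :
    L.faces ⊆ K.faces := by
  obtain ⟨t, s, -, hLK⟩ := h
  rw [hLK]
  exact Set.diff_subset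

lemma collapsesTo_faces_subset {K L : SimplicialComplex ℝ E} (h : CollapsesTo K L) :
    L.faces ⊆ K.faces := by
  induction h with
  | refl => exact subset_rfl
  | tail _ hbc ih => exact (elem_faces_subset hbc).trans ih

lemma sdr_trans {Y X W : SimplicialComplex ℝ E} (hXY : X.space ⊆ Y.space)
    (hWX : W.space ⊆ X.space) (h1 : SDR Y X) (h2 : SDR X W) : SDR Y W := by
  classical
  obtain ⟨H1, h10, h11, h1r⟩ := h1
  obtain ⟨H2, h20, h21, h2r⟩ := h2
  set SW : Set Y.space := {y : Y.space | (y : E) ∈ W.space} with hSW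
  have hcont1 : Continuous fun p : I × Y.space => H1 (p.2, p.1) :=
    H1.continuous.comp (continuous_snd.prodMk continuous_fst)
  set r1 : C(Y.space, Y.space) :=
    ⟨fun y => H1 (y, 1), H1.continuous.comp (continuous_id.prodMk continuous_const)⟩ with hr1
  set ρ : Y.space → X.space := fun y => ⟨(H1 (y, 1) : E), h11 y⟩ with hρ
  have hρcont : Continuous ρ :=
    ((continuous_subtype_val.comp
      (H1.continuous.comp (continuous_id.prodMk continuous_const)))).subtype_mk _
  set e : C(X.space, Y.space) := ⟨fun x => ⟨(x : E), hXY x.2⟩,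
    continuous_subtype_val.subtype_mk _⟩ with he
  set F1 : ContinuousMap.HomotopyRel (ContinuousMap.id Y.space) r1 SW :=
    { toFun := fun p => H1 (p.2, p.1)
      continuous_toFun := hcont1
      map_zero_left := fun y => h10 y
      map_one_left := fun y => rfl
      prop' := fun u x hx => h1r x (hWX hx) u } with hF1
  set r2 : C(Y.space, Y.space) := ⟨fun y => e (H2 (ρ y, 1)),
    e.continuous.comp (H2.continuous.comp ((hρcont).prodMk continuous_const))⟩ with hr2
  set F2 : ContinuousMap.HomotopyRel r1 r2 SW :=
    { toFun := fun p => e (H2 (ρ p.2, p.1))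
      continuous_toFun := e.continuous.comp (H2.continuous.comp
        ((hρcont.comp continuous_snd).prodMk continuous_fst))
      map_zero_left := fun y => by
        simp only [h20 (ρ y)]
        exact Subtype.ext rfl
      map_one_left := fun y => rfl
      prop' := fun u x hx => by
        have hxX : (x : E) ∈ X.space := hWX hx
        have hρx : ρ x = ⟨(x : E), hxX⟩ := by
          simp only [hρ]
          exact Subtype.ext (show ((H1 (x, 1) : Y.space) : E) = (x : E) from
            congrArg Subtype.val (h1r x hxX 1))
        have h1 : e (H2 (ρ x, u)) = x := by
          rw [hρx, h2r ⟨(x : E), hxX⟩ hx u]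
          exact Subtype.ext rfl
        have h2 : r1 x = x := h1r x hxX 1
        show e (H2 (ρ x, u)) = r1 x
        rw [h1]
        exact h2.symm } with hF2
  set F := F1.trans F2
  refine ⟨⟨fun p => F (p.2, p.1), F.continuous.comp (continuous_snd.prodMk continuous_fst)⟩,
    ?_, ?_, ?_⟩
  · intro y
    exact F.apply_zero y
  · intro y
    show ((F (1, y) : Y.space) : E) ∈ W.space
    rw [F.apply_one]
    exact h21 (ρ y)
  · intro y hy u
    exact F.eq_fst u hy

lemma step_sdr (K L : SimplicialComplex ℝ E) (hfin : K.faces.Finite)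
    (h : ElemCollapse K L) : SDR K L := by
  classical
  obtain ⟨t, s, ⟨ht, hs, hts, hcard, huniq⟩, hLK⟩ := h
  have htsub : t ⊆ s := hts.subset
  have htne : t.Nonempty := Finset.nonempty_iff_ne_empty.2 fun h0 => K.empty_notMem (h0 ▸ ht)
  obtain ⟨a, ha⟩ : ∃ a, s \ t = {a} :=
    Finset.card_eq_one.1 (by rw [Finset.card_sdiff_of_subset htsub, hcard]; omega)
  have haa : a ∈ s \ t := ha ▸ Finset.mem_singleton_self a
  have has : a ∈ s := (Finset.mem_sdiff.1 haa).1
  have hat : a ∉ t := (Finset.mem_sdiff.1 haa).2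
  have hsins : s = insert a t := by
    ext x
    simp only [Finset.mem_insert]
    constructor
    · intro hx
      by_cases hxt : x ∈ t
      · exact Or.inr hxt
      · have : x ∈ s \ t := Finset.mem_sdiff.2 ⟨hx, hxt⟩
        rw [ha] at this
        exact Or.inl (Finset.mem_singleton.1 this)
    · rintro (rfl | hx)
      · exact has
      · exact htsub hx
  -- barycentric coordinate functionals
  set a₀ : {x // x ∈ s} := ⟨a, has⟩ with ha₀
  have hindep : AffineIndependent ℝ ((↑) : {x // x ∈ s} → E) := K.indep hs
  have hli : LinearIndependent ℝ
      (fun i : {x : {x // x ∈ s} // x ≠ a₀} => (((i : {x // x ∈ s}) : E) - (a : E))) := by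
    have h2 := (affineIndependent_iff_linearIndependent_vsub ℝ ((↑) : {x // x ∈ s} → E) a₀).1
      hindep
    simpa [vsub_eq_sub] using h2
  set V : Submodule ℝ E := Submodule.span ℝ
    (Set.range fun i : {x : {x // x ∈ s} // x ≠ a₀} => (((i : {x // x ∈ s}) : E) - (a : E)))
    with hV
  haveI : FiniteDimensional ℝ V := FiniteDimensional.span_of_finite ℝ (Set.finite_range _)
  have hext : ∀ i : {x : {x // x ∈ s} // x ≠ a₀}, ∃ g : E →L[ℝ] ℝ,
      ∀ x : V, g x = (LinearMap.toContinuousLinearMap ((Module.Basis.span hli).coord i)) x := by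
    intro i
    obtain ⟨g, hg, -⟩ := exists_extension_norm_eq V
      (LinearMap.toContinuousLinearMap ((Module.Basis.span hli).coord i))
    exact ⟨g, hg⟩
  choose g hg using hext
  have hmemV : ∀ j : {x : {x // x ∈ s} // x ≠ a₀}, (((j : {x // x ∈ s}) : E) - a) ∈ V :=
    fun j => Submodule.subset_span ⟨j, rfl⟩
  have hgdelta : ∀ i j : {x : {x // x ∈ s} // x ≠ a₀},
      g i ((↑↑j : E) - a) = if j = i then 1 else 0 := by
    intro i j
    have h1 : (⟨(↑↑j : E) - a, hmemV j⟩ : V) = Module.Basis.span hli j :=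
      Subtype.ext (by rw [Module.Basis.span_apply])
    calc g i ((↑↑j : E) - a)
        = (LinearMap.toContinuousLinearMap ((Module.Basis.span hli).coord i))
            (⟨(↑↑j : E) - a, hmemV j⟩ : V) := hg i ⟨(↑↑j : E) - a, hmemV j⟩
      _ = (Module.Basis.span hli).coord i (Module.Basis.span hli j) := by rw [h1]; rfl
      _ = if j = i then 1 else 0 := by
          rw [Module.Basis.coord_apply, Module.Basis.repr_self]
          simp [Finsupp.single_apply]
  -- index function
  set idx : (v : E) → v ∈ t → {x : {x // x ∈ s} // x ≠ a₀} := fun v hv =>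
    ⟨⟨v, htsub hv⟩, fun hh => hat (by
      have hva : v = a := congrArg Subtype.val hh
      exact hva ▸ hv)⟩ with hidx
  set cc : E → E → ℝ := fun v x => if hv : v ∈ t then g (idx v hv) (x - a) else 0 with hcc
  have hccdelta : ∀ (v) (hv : v ∈ t) (u) (hu : u ∈ t), cc v u = if u = v then 1 else 0 := by
    intro v hv u hu
    rw [hcc]
    simp only [dif_pos hv]
    have := hgdelta (idx v hv) (idx u hu)
    simp only [hidx] at this ⊢
    rw [this]
    congr 1
    simp [Subtype.ext_iff]
  have hcccont : ∀ v, Continuous (cc v) := by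
    intro v
    rw [hcc]
    by_cases hv : v ∈ t
    · simp only [dif_pos hv]
      exact (g (idx v hv)).continuous.comp (continuous_id.sub continuous_const)
    · simp only [dif_neg hv]
      exact continuous_const
  -- reproduction of weights
  have hrepro : ∀ (w : E → ℝ), (∑ u ∈ s, w u = 1) → ∀ v ∈ t,
      cc v (∑ u ∈ s, w u • u) = w v := by
    intro w hw v hv
    have hsum : (∑ u ∈ s, w u • u) - a = ∑ u ∈ s, w u • (u - a) := by
      simp only [smul_sub, Finset.sum_sub_distrib, ← Finset.sum_smul, hw, one_smul]
    rw [hcc]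
    simp only [dif_pos hv]
    rw [hsum, map_sum]
    simp only [map_smul, smul_eq_mul]
    rw [hsins, Finset.sum_insert hat, sub_self, map_zero, mul_zero, zero_add]
    have hterm : ∀ u ∈ t, w u * (g (idx v hv)) (u - a) = if u = v then w u else 0 := by
      intro u hu
      have hd := hccdelta v hv u hu
      rw [hcc] at hd
      simp only [dif_pos hv] at hd
      rw [hd]
      by_cases huv : u = v <;> simp [huv]
    rw [Finset.sum_congr rfl hterm, Finset.sum_ite_eq' t v (fun u => w u), if_pos hv]
  -- the retraction data
  set m : E → ℝ := fun x => t.inf' htne fun v => cc v x with hm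
  have hmcont : Continuous m :=
    Continuous.finset_inf'_apply htne fun v _ => hcccont v
  set w0 : E := (t.card : ℝ) • a - ∑ v ∈ t, v with hw0
  set Φ : E → ℝ → E := fun x u => x + (u * m x) • w0 with hΦ
  have hΦcont : Continuous fun p : E × ℝ => Φ p.1 p.2 := by
    rw [hΦ]
    exact continuous_fst.add
      (((continuous_snd.mul (hmcont.comp continuous_fst))).smul continuous_const)
  -- coordinates of points of the simplex
  have hxrep : ∀ x ∈ convexHull ℝ (s : Set E), ∃ w : E → ℝ,
      (∀ y ∈ s, 0 ≤ w y) ∧ (∑ y ∈ s, w y = 1) ∧ (∑ y ∈ s, w y • y = x) ∧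
      (∀ v ∈ t, cc v x = w v) := by
    intro x hx
    rw [Finset.convexHull_eq] at hx
    obtain ⟨w, hw0', hw1, hwx⟩ := hx
    have hxe : ∑ y ∈ s, w y • y = x := by
      rw [← hwx, Finset.centerMass_eq_of_sum_1 _ _ hw1]
      simp
    exact ⟨w, hw0', hw1, hxe, fun v hv => by rw [← hxe]; exact hrepro w hw1 v hv⟩
  -- the key computation of new weights
  have hkey : ∀ x ∈ convexHull ℝ (s : Set E), ∀ u : ℝ, 0 ≤ u → u ≤ 1 →
      ∃ w' : E → ℝ, (∀ y ∈ s, 0 ≤ w' y) ∧ (∑ y ∈ s, w' y = 1) ∧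
        (∑ y ∈ s, w' y • y = Φ x u) ∧ (∀ v ∈ t, w' v = cc v x - u * m x) := by
    intro x hx u hu0 hu1
    obtain ⟨w, hwnn, hw1, hxe, hccw⟩ := hxrep x hx
    have hmnn : 0 ≤ m x := Finset.le_inf' htne _ fun v hv => by rw [hccw v hv]; exact hwnn v (htsub hv)
    have hmle : ∀ v ∈ t, m x ≤ w v := fun v hv => by
      rw [← hccw v hv]; exact Finset.inf'_le _ hv
    have hne' : ∀ y ∈ t, y ≠ a := fun y hy h' => hat (h' ▸ hy)
    refine ⟨fun y => if y = a then w a + u * ((t.card : ℝ) * m x) else w y - u * m x,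
      ?_, ?_, ?_, ?_⟩
    · intro y hy
      beta_reduce
      split_ifs with hya
      · have h1 : (0:ℝ) ≤ u * ((t.card : ℝ) * m x) :=
          mul_nonneg hu0 (mul_nonneg (Nat.cast_nonneg _) hmnn)
        linarith [hwnn a has]
      · have hyt : y ∈ t := by
          rw [hsins] at hy
          rcases Finset.mem_insert.1 hy with h' | h'
          · exact absurd h' hya
          · exact h'
        have h1 : u * m x ≤ m x := by nlinarith
        linarith [hmle y hyt]
    · rw [hsins, Finset.sum_insert hat]
      beta_reduce
      rw [if_pos rfl]
      have hcongr : ∀ y ∈ t, (if y = a then w a + u * ((t.card : ℝ) * m x) else w y - u * m x)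
          = w y - u * m x := fun y hy => if_neg (hne' y hy)
      rw [Finset.sum_congr rfl hcongr, Finset.sum_sub_distrib, Finset.sum_const,
        nsmul_eq_mul]
      have hws : w a + ∑ y ∈ t, w y = 1 := by
        rw [← Finset.sum_insert hat, ← hsins]; exact hw1
      ring_nf
      ring_nf at hws
      linarith [hws]
    · rw [hsins, Finset.sum_insert hat]
      beta_reduce
      rw [if_pos rfl]
      have hcongr : ∀ y ∈ t, (if y = a then w a + u * ((t.card : ℝ) * m x) else w y - u * m x) • y
          = w y • y - (u * m x) • y := fun y hy => by rw [if_neg (hne' y hy), sub_smul]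
      rw [Finset.sum_congr rfl hcongr, Finset.sum_sub_distrib, ← Finset.smul_sum]
      have hxe' : x = w a • a + ∑ y ∈ t, w y • y := by
        rw [← hxe, hsins, Finset.sum_insert hat]
      rw [hΦ]
      beta_reduce
      rw [hxe', hw0]
      module
    · intro v hv
      beta_reduce
      rw [if_neg (hne' v hv), hccw v hv]
  -- membership of the homotopy in the simplex
  have hA : ∀ x ∈ convexHull ℝ (s : Set E), ∀ u : ℝ, 0 ≤ u → u ≤ 1 →
      Φ x u ∈ convexHull ℝ (s : Set E) := by
    intro x hx u hu0 hu1
    obtain ⟨w', hw'nn, hw'1, hw'e, -⟩ := hkey x hx u hu0 hu1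
    rw [Finset.convexHull_eq]
    refine ⟨w', hw'nn, hw'1, ?_⟩
    rw [Finset.centerMass_eq_of_sum_1 _ _ hw'1]
    simpa using hw'e
  -- faces obtained by erasing a vertex of t are faces of L
  have herase : ∀ v₀ ∈ t, s.erase v₀ ∈ L.faces := by
    intro v₀ hv₀
    have hane : a ≠ v₀ := fun h => hat (h ▸ hv₀)
    have hamem : a ∈ s.erase v₀ := Finset.mem_erase.2 ⟨hane, has⟩
    have hne : s.erase v₀ ≠ ∅ := Finset.ne_empty_of_mem hamem
    have hKe : s.erase v₀ ∈ K.faces := K.down_closed hs (Finset.erase_subset _ _) (Finset.nonempty_iff_ne_empty.2 hne)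
    rw [hLK]
    refine ⟨hKe, ?_⟩
    simp only [Set.mem_insert_iff, Set.mem_singleton_iff]
    push_neg
    constructor
    · intro h'
      exact hat (h' ▸ hamem)
    · intro h'
      have : v₀ ∈ s.erase v₀ := h'.symm ▸ (htsub hv₀)
      exact (Finset.notMem_erase v₀ s) this
  -- at time 1 the homotopy lands in L
  have hB : ∀ x ∈ convexHull ℝ (s : Set E), Φ x 1 ∈ L.space := by
    intro x hx
    obtain ⟨w', hw'nn, hw'1, hw'e, hw'v⟩ := hkey x hx 1 zero_le_one le_rfl
    obtain ⟨v₀, hv₀t, hv₀⟩ := Finset.exists_mem_eq_inf' htne (fun v => cc v x)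
    have hv₀s : v₀ ∈ s := htsub hv₀t
    have hzero : w' v₀ = 0 := by
      rw [hw'v v₀ hv₀t, one_mul, hm]
      beta_reduce
      rw [← hv₀]
      ring
    have hsum1 : ∑ y ∈ s.erase v₀, w' y = 1 := by
      have := Finset.add_sum_erase s w' hv₀s
      rw [hzero, zero_add] at this
      rw [this, hw'1]
    have hsume : ∑ y ∈ s.erase v₀, w' y • y = Φ x 1 := by
      have := Finset.add_sum_erase s (fun y => w' y • y) hv₀s
      beta_reduce at this
      rw [hzero, zero_smul, zero_add] at this
      rw [this, hw'e]
    have hmem : Φ x 1 ∈ convexHull ℝ ((s.erase v₀ : Finset E) : Set E) := by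
      rw [Finset.convexHull_eq]
      refine ⟨w', fun y hy => hw'nn y (Finset.erase_subset _ _ hy), hsum1, ?_⟩
      rw [Finset.centerMass_eq_of_sum_1 _ _ hsum1]
      simpa using hsume
    exact Geometry.SimplicialComplex.convexHull_subset_space (herase v₀ hv₀t) hmem
  -- on L ∩ simplex the function m vanishes
  have hC : ∀ x, x ∈ convexHull ℝ (s : Set E) → x ∈ L.space → m x = 0 := by
    intro x hx hxL
    rw [Geometry.SimplicialComplex.mem_space_iff] at hxL
    obtain ⟨f, hfL, hxf⟩ := hxL
    have hfK : f ∈ K.faces := by rw [hLK] at hfL; exact hfL.1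
    have hfns : f ≠ t ∧ f ≠ s := by
      rw [hLK] at hfL
      have := hfL.2
      simp only [Set.mem_insert_iff, Set.mem_singleton_iff] at this
      push_neg at this
      exact this
    have hxint : x ∈ convexHull ℝ ((f ∩ s : Finset E) : Set E) := by
      have h1 := K.inter_subset_convexHull hfK hs ⟨hxf, hx⟩
      rwa [← Finset.coe_inter] at h1
    obtain ⟨v₀, hv₀t, hv₀n⟩ : ∃ v₀ ∈ t, v₀ ∉ f ∩ s := by
      by_contra hcon
      push_neg at hcon
      have htsubf : t ⊆ f := fun v hv => (Finset.mem_inter.1 (hcon v hv)).1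
      have htssf : t ⊂ f := htsubf.ssubset_of_ne (fun h => hfns.1 h.symm)
      exact hfns.2 (huniq f hfK htssf)
    rw [Finset.convexHull_eq] at hxint
    obtain ⟨w, hwnn, hw1, hwx⟩ := hxint
    have hxei : ∑ y ∈ f ∩ s, w y • y = x := by
      rw [← hwx, Finset.centerMass_eq_of_sum_1 _ _ hw1]
      simp
    set w' : E → ℝ := fun y => if y ∈ f ∩ s then w y else 0 with hw'
    have hsubfs : f ∩ s ⊆ s := Finset.inter_subset_right
    have hw'1 : ∑ y ∈ s, w' y = 1 := by
      rw [← Finset.sum_subset hsubfs (fun y _ hyn => if_neg hyn)]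
      rw [← hw1]
      exact Finset.sum_congr rfl fun y hy => if_pos hy
    have hw'e : ∑ y ∈ s, w' y • y = x := by
      rw [← Finset.sum_subset hsubfs (fun y _ hyn => by
        simp only [hw']
        rw [if_neg hyn, zero_smul])]
      rw [← hxei]
      exact Finset.sum_congr rfl fun y hy => by simp only [hw']; rw [if_pos hy]
    have hccx : ∀ v ∈ t, cc v x = w' v := by
      intro v hv
      rw [← hw'e]
      exact hrepro w' hw'1 v hv
    have hub : m x ≤ 0 := by
      have h1 : cc v₀ x = 0 := by
        rw [hccx v₀ hv₀t]
        simp only [hw']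
        rw [if_neg hv₀n]
      calc m x ≤ cc v₀ x := Finset.inf'_le _ hv₀t
        _ = 0 := h1
    have hlb : 0 ≤ m x := Finset.le_inf' htne _ fun v hv => by
      rw [hccx v hv]
      simp only [hw']
      by_cases hvm : v ∈ f ∩ s
      · rw [if_pos hvm]; exact hwnn v hvm
      · rw [if_neg hvm]
    linarith
  -- topology: closedness and covering
  have hLfaces : L.faces ⊆ K.faces := by
    rw [hLK]; exact Set.diff_subset
  have hLfin : L.faces.Finite := hfin.subset hLfaces
  have hLclosed : IsClosed L.space :=
    Set.Finite.isClosed_biUnion hLfin fun u _ =>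
      (u.finite_toSet.isCompact_convexHull ℝ).isClosed
  have hsclosed : IsClosed (convexHull ℝ (s : Set E)) :=
    (s.finite_toSet.isCompact_convexHull ℝ).isClosed
  have hcover : ∀ x ∈ K.space, x ∈ convexHull ℝ (s : Set E) ∨ x ∈ L.space := by
    intro x hx
    rw [Geometry.SimplicialComplex.mem_space_iff] at hx
    obtain ⟨f, hf, hxf⟩ := hx
    by_cases hft : f = t
    · left
      exact convexHull_mono (by rw [hft] at hxf ⊢; exact_mod_cast htsub) hxf
    by_cases hfs : f = s
    · left
      rw [hfs] at hxf
      exact hxf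
    · right
      rw [Geometry.SimplicialComplex.mem_space_iff]
      exact ⟨f, by rw [hLK]; exact ⟨hf, by simp [hft, hfs]⟩, hxf⟩
  have hssubK : convexHull ℝ (s : Set E) ⊆ K.space :=
    Geometry.SimplicialComplex.convexHull_subset_space hs
  -- the global map
  set A : Set (K.space × I) := {p | (p.1 : E) ∈ convexHull ℝ (s : Set E)} with hA'
  have hAclosed : IsClosed A :=
    hsclosed.preimage (continuous_subtype_val.comp continuous_fst)
  set F : K.space × I → E :=
    A.piecewise (fun p => Φ (p.1 : E) ((p.2 : ℝ))) (fun p => (p.1 : E)) with hF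
  have hfrontier : ∀ p ∈ frontier A, Φ (p.1 : E) ((p.2 : ℝ)) = (p.1 : E) := by
    intro p hp
    rw [frontier_eq_closure_inter_closure] at hp
    have hp1 : p ∈ A := by
      rw [← hAclosed.closure_eq]; exact hp.1
    have hp2 : (p.1 : E) ∈ L.space := by
      have hsubc : closure Aᶜ ⊆ {q : K.space × I | (q.1 : E) ∈ L.space} := by
        apply closure_minimal
        · intro q hq
          rcases hcover (q.1 : E) q.1.2 with h' | h'
          · exact absurd h' hq
          · exact h'
        · exact hLclosed.preimage (continuous_subtype_val.comp continuous_fst)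
      exact hsubc hp.2
    have hm0 : m (p.1 : E) = 0 := hC _ hp1 hp2
    rw [hΦ]
    simp [hm0]
  have hFcont : Continuous F := by
    rw [hF]
    refine Continuous.piecewise hfrontier ?_ (continuous_subtype_val.comp continuous_fst)
    exact hΦcont.comp ((continuous_subtype_val.comp continuous_fst).prodMk
      (continuous_subtype_val.comp continuous_snd))
  have hFmem : ∀ p : K.space × I, F p ∈ K.space := by
    intro p
    by_cases hp : p ∈ A
    · rw [hF, Set.piecewise_eq_of_mem _ _ _ hp]
      exact hssubK (hA (p.1 : E) hp (p.2 : ℝ) p.2.2.1 p.2.2.2)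
    · rw [hF, Set.piecewise_eq_of_notMem _ _ _ hp]
      exact p.1.2
  refine ⟨⟨fun p => ⟨F p, hFmem p⟩, hFcont.subtype_mk _⟩, ?_, ?_, ?_⟩
  · intro y
    apply Subtype.ext
    show F (y, 0) = (y : E)
    by_cases hp : ((y, (0:I)) : K.space × I) ∈ A
    · rw [hF, Set.piecewise_eq_of_mem _ _ _ hp, hΦ]
      simp
    · rw [hF, Set.piecewise_eq_of_notMem _ _ _ hp]
  · intro y
    show F (y, 1) ∈ L.space
    by_cases hp : ((y, (1:I)) : K.space × I) ∈ A
    · rw [hF, Set.piecewise_eq_of_mem _ _ _ hp]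
      have : ((1 : I) : ℝ) = (1 : ℝ) := rfl
      rw [this]
      exact hB (y : E) hp
    · rw [hF, Set.piecewise_eq_of_notMem _ _ _ hp]
      rcases hcover (y : E) y.2 with h' | h'
      · exact absurd h' hp
      · exact h'
  · intro y hy u
    apply Subtype.ext
    show F (y, u) = (y : E)
    by_cases hp : ((y, u) : K.space × I) ∈ A
    · rw [hF, Set.piecewise_eq_of_mem _ _ _ hp, hΦ]
      have hm0 : m (y : E) = 0 := hC _ hp hy
      simp [hm0]
    · rw [hF, Set.piecewise_eq_of_notMem _ _ _ hp]

lemma sdr_of_collapsesTo (Y X : SimplicialComplex ℝ E) (h : CollapsesTo Y X) :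
    Y.faces.Finite → SDR Y X := by
  induction h using Relation.ReflTransGen.head_induction_on with
  | refl => exact fun _ => sdr_refl X
  | head hac hcb ih =>
      intro hfin
      exact sdr_trans (space_mono (elem_faces_subset hac))
        (space_mono (collapsesTo_faces_subset hcb))
        (step_sdr _ _ hfin hac) (ih (hfin.subset (elem_faces_subset hac)))

end CollapseProofAux

/-- If a finite simplicial complex `Y` collapses onto a subcomplex `X`, then the
underlying polyhedron `|X|` is a strong deformation retract of `|Y|`; in
particular, the underlying space of every collapsible finite simplicial complex
is contractible. -/
theorem collapsesTo_strongDeformationRetract :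
    (∀ (Y X : SimplicialComplex ℝ E), Y.faces.Finite → CollapsesTo Y X →
      ∃ H : C(Y.space × I, Y.space),
        (∀ y : Y.space, H (y, 0) = y) ∧
        (∀ y : Y.space, ((H (y, 1) : E) ∈ X.space)) ∧
        (∀ y : Y.space, (y : E) ∈ X.space → ∀ t : I, H (y, t) = y)) ∧
    (∀ K : SimplicialComplex ℝ E, K.faces.Finite → Collapsible K →
      ContractibleSpace K.space) := by
  constructor
  · intro Y X hfin hc
    exact CollapseProofAux.sdr_of_collapsesTo Y X hc hfin
  · rintro K hfin ⟨L, v, hLf, hcol⟩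
    obtain ⟨H, h0, h1, -⟩ := CollapseProofAux.sdr_of_collapsesTo K L hcol hfin
    have hLspace : L.space = {v} := by
      simp [SimplicialComplex.space, hLf]
    have hvK : (v : E) ∈ K.space := by
      apply CollapseProofAux.space_mono (CollapseProofAux.collapsesTo_faces_subset hcol)
      rw [hLspace]
      exact Set.mem_singleton v
    haveI : Nonempty K.space := ⟨⟨v, hvK⟩⟩
    rw [contractible_iff_id_nullhomotopic]
    refine ⟨⟨v, hvK⟩, ⟨{
      toFun := fun p => H (p.2, p.1)
      continuous_toFun := H.continuous.comp (continuous_snd.prodMk continuous_fst)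
      map_zero_left := fun y => h0 y
      map_one_left := fun y => Subtype.ext (by
        have h2 := h1 y
        rw [hLspace] at h2
        exact h2) }⟩⟩
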